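/- Let a_1, a_2, a_3 ≥ 2 be pairwise coprime integers and b_1, b_2, b_3 positive integers with 0 < b_i < a_i, satisfying b_1/a_1 + b_2/a_2 + b_3/a_3 = 1 + ε/(a_1 a_2 a_3) with ε ∈ {−1, 1}, ordered with b_1/a_1 > b_2/a_2 > b_3/a_3 and b_1/a_1 ≥ 1/2. Set α_1 = 1 − b_1/a_1, α_2 = b_2/a_2, and N = ⌊1/(α_1 − α_2)⌋. Then N ≥ 4. -/

import Mathlib

theorem stmt_4 (a₁ a₂ a₃ b₁ b₂ b₃ ε : ℤ)
    (ha₁ : 2 ≤ a₁) (ha₂ : 2 ≤ a₂) (ha₃ : 2 ≤ a₃)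
    (hcop12 : IsCoprime a₁ a₂) (hcop13 : IsCoprime a₁ a₃) (hcop23 : IsCoprime a₂ a₃)
    (hb₁ : 0 < b₁) (hb₁' : b₁ < a₁) (hb₂ : 0 < b₂) (hb₂' : b₂ < a₂)
    (hb₃ : 0 < b₃) (hb₃' : b₃ < a₃)
    (hε : ε = 1 ∨ ε = -1)
    (heq : (b₁ : ℚ) / a₁ + (b₂ : ℚ) / a₂ + (b₃ : ℚ) / a₃
      = 1 + (ε : ℚ) / ((a₁ : ℚ) * a₂ * a₃))
    (hord₁ : (b₂ : ℚ) / a₂ < (b₁ : ℚ) / a₁) (hord₂ : (b₃ : ℚ) / a₃ < (b₂ : ℚ) / a₂)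
    (hhalf : (1 : ℚ) / 2 ≤ (b₁ : ℚ) / a₁) :
    4 ≤ ⌊(1 : ℚ) / ((1 - (b₁ : ℚ) / a₁) - (b₂ : ℚ) / a₂)⌋ := by
  have ha₁Q : (0:ℚ) < (a₁:ℚ) := by exact_mod_cast lt_of_lt_of_le (by norm_num) ha₁
  have ha₂Q : (0:ℚ) < (a₂:ℚ) := by exact_mod_cast lt_of_lt_of_le (by norm_num) ha₂
  have ha₃Q : (0:ℚ) < (a₃:ℚ) := by exact_mod_cast lt_of_lt_of_le (by norm_num) ha₃
  -- integer version of the main equation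
  have hE : b₁*a₂*a₃ + b₂*a₁*a₃ + b₃*a₁*a₂ = a₁*a₂*a₃ + ε := by
    have h := heq
    field_simp at h
    have h2 : (b₁ * a₂ + b₂ * a₁) * a₃ + b₃ * (a₁ * a₂) = a₁ * a₂ * a₃ + ε := by
      have h' : (((b₁ * a₂ + b₂ * a₁) * a₃ + b₃ * (a₁ * a₂) : ℤ) : ℚ) = ((a₁ * a₂ * a₃ + ε : ℤ) : ℚ) := by
        push_cast; linarith [h]
      exact_mod_cast h'
    linarith
  -- integer version of hord₂
  have h23 : b₃ * a₂ < b₂ * a₃ := by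
    rw [div_lt_div_iff₀ ha₃Q ha₂Q] at hord₂
    exact_mod_cast hord₂
  -- integer version of hhalf
  have hh : a₁ ≤ 2 * b₁ := by
    rw [div_le_div_iff₀ (by norm_num) ha₁Q] at hhalf
    have : (1:ℚ) * a₁ ≤ (b₁:ℚ) * 2 := hhalf
    have : (a₁:ℚ) ≤ 2 * b₁ := by linarith
    exact_mod_cast this
  have hεle : -1 ≤ ε ∧ ε ≤ 1 := by rcases hε with h | h <;> simp [h]
  set b : ℤ := a₁*a₂ - b₁*a₂ - b₂*a₁ with hbdef
  have hba3 : b * a₃ = b₃*a₁*a₂ - ε := by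
    rw [hbdef]; linarith [hE]
  have hbpos : 0 < b := by
    by_contra h
    push_neg at h
    have h1 : b * a₃ ≤ 0 := mul_nonpos_of_nonpos_of_nonneg h (by linarith)
    nlinarith [hεle.2, hba3, mul_nonneg (by linarith : (0:ℤ) ≤ b₃ - 1) (by positivity : (0:ℤ) ≤ a₁*a₂), mul_nonneg (by linarith : (0:ℤ) ≤ a₁ - 2) (by linarith : (0:ℤ) ≤ a₂ - 2)]
  -- key inequality: 4 * b * a₃ ≤ a₁*a₂*a₃
  have hkey : 4 * b * a₃ ≤ a₁ * a₂ * a₃ := by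
    have h1 : b₃*a₁*a₂ + 1 ≤ b₂*a₁*a₃ := by nlinarith [h23, ha₁Q]
    have h2 : a₁*(a₂*a₃) ≤ 2*b₁*(a₂*a₃) := by
      have : (0:ℤ) < a₂*a₃ := by positivity
      nlinarith [hh]
    nlinarith [hεle.1, hεle.2]
  have h4b : 4 * b ≤ a₁ * a₂ := le_of_mul_le_mul_right (by linarith [hkey]) (by linarith : (0:ℤ) < a₃)
  rw [Int.le_floor]
  have hx : (1 - (b₁:ℚ)/a₁) - (b₂:ℚ)/a₂ = (b:ℚ) / ((a₁:ℚ)*a₂) := by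
    rw [hbdef]
    push_cast
    field_simp
  rw [hx, one_div_div, le_div_iff₀ (by exact_mod_cast hbpos : (0:ℚ) < (b:ℚ))]
  push_cast
  have h4bQ : ((4 * b : ℤ) : ℚ) ≤ ((a₁ * a₂ : ℤ) : ℚ) := Int.cast_le.mpr h4b
  push_cast at h4bQ ⊢
  linarith
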